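/- Let W be a module and define Γ(x,a,y,b,z) := {ω ∈ W | ∃ α ∈ a, ∃ β ∈ b, ω + α ∈ z ∧ ω + α + β ∈ y ∧ ω + β ∈ x} for submodules x,a,y,b,z. Then Γ is invariant under the Klein four-group acting on (x,a,b,z): Γ(x,a,y,b,z) = Γ(z,b,y,a,x) and Γ(x,a,y,b,z) = Γ(a,x,y,z,b). -/
import Mathlib


/-- The quintary Grassmannian product:
`Γ(x,a,y,b,z) = {ω | ∃ α ∈ a, ∃ β ∈ b, ω + α ∈ z ∧ ω + α + β ∈ y ∧ ω + β ∈ x}`,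
as a submodule of `W`. -/
def Gamma {R : Type*} [Ring R] {W : Type*} [AddCommGroup W] [Module R W]
    (x a y b z : Submodule R W) : Submodule R W where
  carrier := {ω : W | ∃ α ∈ a, ∃ β ∈ b, ω + α ∈ z ∧ ω + α + β ∈ y ∧ ω + β ∈ x}
  zero_mem' := ⟨0, a.zero_mem, 0, b.zero_mem, by simp, by simp, by simp⟩
  add_mem' := by
    rintro ω ω' ⟨α, hα, β, hβ, h1, h2, h3⟩ ⟨α', hα', β', hβ', h1', h2', h3'⟩
    refine ⟨α + α', a.add_mem hα hα', β + β', b.add_mem hβ hβ', ?_, ?_, ?_⟩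
    · rw [show ω + ω' + (α + α') = (ω + α) + (ω' + α') by abel]
      exact z.add_mem h1 h1'
    · rw [show ω + ω' + (α + α') + (β + β') = (ω + α + β) + (ω' + α' + β') by abel]
      exact y.add_mem h2 h2'
    · rw [show ω + ω' + (β + β') = (ω + β) + (ω' + β') by abel]
      exact x.add_mem h3 h3'
  smul_mem' := by
    rintro c ω ⟨α, hα, β, hβ, h1, h2, h3⟩
    refine ⟨c • α, a.smul_mem c hα, c • β, b.smul_mem c hβ, ?_, ?_, ?_⟩
    · rw [← smul_add]; exact z.smul_mem c h1
    · rw [show c • ω + c • α + c • β = c • (ω + α + β) by rw [smul_add, smul_add]]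
      exact y.smul_mem c h2
    · rw [← smul_add]; exact x.smul_mem c h3


lemma Gamma_mem_iff {R : Type*} [Ring R] {W : Type*} [AddCommGroup W] [Module R W]
    (x a y b z : Submodule R W) (ω : W) :
    ω ∈ Gamma x a y b z ↔
      ∃ α ∈ a, ∃ β ∈ b, ω + α ∈ z ∧ ω + α + β ∈ y ∧ ω + β ∈ x := Iff.rfl

lemma Gamma_swap {R : Type*} [Ring R] {W : Type*} [AddCommGroup W] [Module R W]
    (x a y b z : Submodule R W) : Gamma x a y b z ≤ Gamma z b y a x := by
  rintro ω ⟨α, hα, β, hβ, h1, h2, h3⟩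
  exact ⟨β, hβ, α, hα, h3, by rwa [show ω + β + α = ω + α + β by abel], h1⟩

lemma Gamma_flip {R : Type*} [Ring R] {W : Type*} [AddCommGroup W] [Module R W]
    (x a y b z : Submodule R W) : Gamma x a y b z ≤ Gamma a x y z b := by
  rintro ω ⟨α, hα, β, hβ, h1, h2, h3⟩
  refine ⟨-(ω + β), x.neg_mem h3, -(ω + α), z.neg_mem h1, ?_, ?_, ?_⟩
  · rw [show ω + -(ω + β) = -β by abel]; exact b.neg_mem hβ
  · rw [show ω + -(ω + β) + -(ω + α) = -(ω + α + β) by abel]; exact y.neg_mem h2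
  · rw [show ω + -(ω + α) = -α by abel]; exact a.neg_mem hα

/-- `Γ` is invariant under the Klein four-group acting on `(x,a,b,z)`:
`Γ(x,a,y,b,z) = Γ(z,b,y,a,x)` and `Γ(x,a,y,b,z) = Γ(a,x,y,z,b)`. -/
theorem Gamma_klein_symmetry {R : Type*} [Ring R] {W : Type*} [AddCommGroup W]
    [Module R W] (x a y b z : Submodule R W) :
    Gamma x a y b z = Gamma z b y a x ∧ Gamma x a y b z = Gamma a x y z b := by
  constructor
  · exact le_antisymm (Gamma_swap x a y b z) (Gamma_swap z b y a x)
  · exact le_antisymm (Gamma_flip x a y b z) (Gamma_flip a x y z b)
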